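/- Let μ be an eigenvalue of the Dirichlet operator D f = -f'' + V f on [0,l] with f(0)=f(l)=0. Then u₁(l;μ) = 0, and the derivative with respect to z of u₁(l;z) at z = μ equals u₂(l;μ) · ∫₀ˡ u₁(s;μ)² ds, which is nonzero; in particular μ is a simple zero of the entire function z ↦ u₁(l;z). -/

import Mathlib

open MeasureTheory Set intervalIntegral

lemma gronwall_L1 {L : ℝ} (hL : 0 ≤ L) {w : ℝ → ℝ}
    (hw_int : IntegrableOn w (Icc 0 L)) (hw_nn : ∀ t, 0 ≤ w t) :
    ∃ C : ℝ, 0 ≤ C ∧ ∀ (ε : ℝ) (u : ℝ → ℝ), 0 ≤ ε → Continuous u →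
      (∀ t, 0 ≤ u t) →
      (∀ x ∈ Icc 0 L, u x ≤ ε + ∫ t in (0:ℝ)..x, w t * u t) →
      ∀ x ∈ Icc 0 L, u x ≤ C * ε := by
  have hwi : ∀ a b : ℝ, a ∈ Icc 0 L → b ∈ Icc 0 L → IntervalIntegrable w volume a b := by
    intro a b ha hb
    apply (hw_int.mono_set ?_).intervalIntegrable
    rw [← uIcc_of_le hL]
    exact uIcc_subset_uIcc (by rwa [uIcc_of_le hL]) (by rwa [uIcc_of_le hL])
  set F : ℝ → ℝ := fun x => ∫ t in (0:ℝ)..x, w t with hF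
  have hFadd : ∀ a b : ℝ, a ∈ Icc 0 L → b ∈ Icc 0 L →
      F a + ∫ t in a..b, w t = F b := by
    intro a b ha hb
    exact integral_add_adjacent_intervals (hwi 0 a (by constructor <;> [exact le_rfl; exact hL]) ha)
      (hwi a b ha hb)
  have hFmono : ∀ a b : ℝ, a ∈ Icc 0 L → b ∈ Icc 0 L → a ≤ b → F a ≤ F b := by
    intro a b ha hb hab
    have h1 := hFadd a b ha hb
    have h2 : 0 ≤ ∫ t in a..b, w t :=
      intervalIntegral.integral_nonneg hab (fun x _ => hw_nn x)
    linarith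
  have h0mem : (0:ℝ) ∈ Icc 0 L := ⟨le_rfl, hL⟩
  have hLmem : L ∈ Icc 0 L := ⟨hL, le_rfl⟩
  have hF0 : F 0 = 0 := integral_same
  have hFL0 : 0 ≤ F L := by have := hFmono 0 L h0mem hLmem hL; linarith
  set c : ℝ := 1 + 2 * F L with hc
  have hc1 : 1 ≤ c := by simp [hc]; linarith
  set N : ℕ := Nat.ceil (2 * F L) with hN
  refine ⟨(3*c)^(N+1), by positivity, ?_⟩
  intro ε u hε hu hunn hineq
  -- integrability of w * u on subintervals
  have hwu_int : IntegrableOn (fun t => w t * u t) (Icc 0 L) := by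
    obtain ⟨B, hB⟩ := isCompact_Icc.exists_bound_of_continuousOn (hu.continuousOn (s := Icc 0 L))
    have : IntegrableOn (fun t => u t * w t) (Icc 0 L) := by
      apply Integrable.bdd_mul (c := B) hw_int hu.aestronglyMeasurable.restrict
      exact (ae_restrict_iff' measurableSet_Icc).2 (Filter.Eventually.of_forall hB)
    simpa [mul_comm] using this
  have hwui : ∀ a b : ℝ, a ∈ Icc 0 L → b ∈ Icc 0 L →
      IntervalIntegrable (fun t => w t * u t) volume a b := by
    intro a b ha hb
    apply (hwu_int.mono_set ?_).intervalIntegrable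
    rw [← uIcc_of_le hL]
    exact uIcc_subset_uIcc (by rwa [uIcc_of_le hL]) (by rwa [uIcc_of_le hL])
  -- key step
  have key : ∀ a b K : ℝ, a ∈ Icc 0 L → b ∈ Icc 0 L → a ≤ b →
      (∫ t in a..b, w t) ≤ 1/2 → 0 ≤ K → (∀ y ∈ Icc 0 a, u y ≤ K) →
      ∀ y ∈ Icc 0 b, u y ≤ 2*ε + c*K := by
    intro a b K ha hb hab hhalf hK0 hbdd
    obtain ⟨xm, hxmem, hxmax⟩ := isCompact_Icc.exists_isMaxOn (f := u)
      (nonempty_Icc.2 hab) (hu.continuousOn (s := Icc a b))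
    set M := u xm with hM
    have hxmIcc : xm ∈ Icc 0 L := ⟨ha.1.trans hxmem.1, hxmem.2.trans hb.2⟩
    have hM0 : 0 ≤ M := hunn xm
    have hsplit : (∫ t in (0:ℝ)..xm, w t * u t)
        = (∫ t in (0:ℝ)..a, w t * u t) + ∫ t in a..xm, w t * u t :=
      (integral_add_adjacent_intervals (hwui 0 a h0mem ha) (hwui a xm ha hxmIcc)).symm
    have hb1 : (∫ t in (0:ℝ)..a, w t * u t) ≤ F a * K := by
      have := intervalIntegral.integral_mono_on ha.1 (hwui 0 a h0mem ha)
        ((hwi 0 a h0mem ha).mul_const K)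
        (fun x hx => mul_le_mul_of_nonneg_left (hbdd x hx) (hw_nn x))
      simpa [intervalIntegral.integral_mul_const] using this
    have hb2 : (∫ t in a..xm, w t * u t) ≤ (1/2) * M := by
      have h1 : (∫ t in a..xm, w t * u t) ≤ (∫ t in a..xm, w t) * M := by
        have := intervalIntegral.integral_mono_on hxmem.1 (hwui a xm ha hxmIcc)
          ((hwi a xm ha hxmIcc).mul_const M)
          (fun x hx => mul_le_mul_of_nonneg_left
            (hxmax ⟨hx.1, hx.2.trans hxmem.2⟩) (hw_nn x))
        simpa [intervalIntegral.integral_mul_const] using this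
      have h2 : (∫ t in a..xm, w t) ≤ 1/2 := by
        have hadd : (∫ t in a..xm, w t) + ∫ t in xm..b, w t = ∫ t in a..b, w t :=
          integral_add_adjacent_intervals (hwi a xm ha hxmIcc) (hwi xm b hxmIcc hb)
        have h3 : 0 ≤ ∫ t in xm..b, w t :=
          intervalIntegral.integral_nonneg hxmem.2 (fun x _ => hw_nn x)
        linarith
      calc (∫ t in a..xm, w t * u t) ≤ (∫ t in a..xm, w t) * M := h1
        _ ≤ (1/2) * M := mul_le_mul_of_nonneg_right h2 hM0
    have hFaK : F a * K ≤ F L * K := mul_le_mul_of_nonneg_right (hFmono a L ha hLmem ha.2) hK0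
    have hMle : M ≤ 2*ε + 2 * (F L) * K := by
      have := hineq xm hxmIcc
      rw [hsplit] at this
      have : M ≤ ε + F a * K + (1/2) * M := by linarith
      linarith
    intro y hy
    rcases le_or_gt y a with h | h
    · have := hbdd y ⟨hy.1, h⟩
      nlinarith
    · have := hxmax (⟨h.le, hy.2⟩ : y ∈ Icc a b)
      dsimp at this
      nlinarith
  -- induction
  have ind : ∀ n : ℕ, ∀ a ∈ Icc 0 L, ∀ K : ℝ, F L - F a ≤ n / 2 → ε ≤ K →
      (∀ y ∈ Icc 0 a, u y ≤ K) → ∀ x ∈ Icc 0 L, u x ≤ (3*c)^(n+1) * K := by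
    intro n
    induction n with
    | zero =>
      intro a ha K hdist hεK hbdd x hx
      have hK0 : 0 ≤ K := hε.trans hεK
      have hint : (∫ t in a..L, w t) ≤ 1/2 := by
        have := hFadd a L ha hLmem
        push_cast at hdist
        linarith
      have h1 := key a L K ha hLmem ha.2 hint hK0 hbdd x hx
      have hKcK : K ≤ c*K := by nlinarith
      have hpow1 : (3*c)^(0+1) = 3*c := by norm_num
      rw [hpow1]
      linarith
    | succ n IH =>
      intro a ha K hdist hεK hbdd x hx
      have hK0 : 0 ≤ K := hε.trans hεK
      have h3c1 : (1:ℝ) ≤ 3*c := by linarith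
      by_cases hcase : F L - F a ≤ 1/2
      · have hint : (∫ t in a..L, w t) ≤ 1/2 := by
          have := hFadd a L ha hLmem
          linarith
        have hx1 := key a L K ha hLmem ha.2 hint hK0 hbdd x hx
        have hpow : (3*c)^1 ≤ (3*c)^(n+1+1) := pow_le_pow_right₀ h3c1 (by omega)
        have : u x ≤ (3*c)^1 * K := by simp; nlinarith
        calc u x ≤ (3*c)^1 * K := this
          _ ≤ (3*c)^(n+1+1) * K := mul_le_mul_of_nonneg_right hpow hK0
      · push_neg at hcase
        have hivt := intermediate_value_Icc ha.2 (by
          apply (continuousOn_primitive_interval' (hwi 0 L h0mem hLmem)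
            (by rw [uIcc_of_le hL]; exact h0mem)).mono
          rw [uIcc_of_le hL]
          exact Icc_subset_Icc ha.1 le_rfl)
        have hmem2 : F a + 1/2 ∈ Icc (F a) (F L) := ⟨by linarith, by linarith⟩
        obtain ⟨b, hbmem, hFb0⟩ := hivt hmem2
        have hFb : F b = F a + 1/2 := hFb0
        have hbIcc : b ∈ Icc 0 L := ⟨ha.1.trans hbmem.1, hbmem.2⟩
        have hintab : (∫ t in a..b, w t) ≤ 1/2 := by
          have := hFadd a b ha hbIcc
          rw [hFb] at this
          linarith
        have hstep := key a b K ha hbIcc hbmem.1 hintab hK0 hbdd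
        have hbdd' : ∀ y ∈ Icc 0 b, u y ≤ 3*c*K := by
          intro y hy
          have := hstep y hy
          nlinarith
        have hdist' : F L - F b ≤ n / 2 := by
          rw [hFb]
          push_cast at hdist ⊢
          linarith
        have hεK' : ε ≤ 3*c*K := by nlinarith
        have := IH b hbIcc (3*c*K) hdist' hεK' hbdd' x hx
        calc u x ≤ (3*c)^(n+1) * (3*c*K) := this
          _ = (3*c)^(n+1+1) * K := by ring
  -- conclusion
  intro x hx
  have hbdd0 : ∀ y ∈ Icc (0:ℝ) 0, u y ≤ ε := by
    intro y hy
    have hy0 : y = 0 := le_antisymm hy.2 hy.1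
    subst hy0
    have := hineq 0 h0mem
    simpa using this
  have hdist0 : F L - F 0 ≤ (N:ℝ) / 2 := by
    rw [hF0]
    have := Nat.le_ceil (2 * F L)
    rw [← hN] at this
    -- need 2 * F L ≤ N
    have h2 : 2 * F L ≤ (N:ℝ) := by exact_mod_cast this
    linarith
  exact ind N 0 h0mem ε hdist0 le_rfl hbdd0 x hx

lemma int_cont_mul {l : ℝ} {𝕜 : Type*} [NormedRing 𝕜] {f g : ℝ → 𝕜}
    (hf : IntegrableOn f (Icc 0 l) volume) (hg : Continuous g) :
    IntegrableOn (fun t => g t * f t) (Icc 0 l) volume := by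
  obtain ⟨B, hB⟩ := isCompact_Icc.exists_bound_of_continuousOn
    (hg.continuousOn (s := Icc 0 l))
  apply Integrable.bdd_mul (c := B) hf hg.aestronglyMeasurable.restrict
  exact (ae_restrict_iff' measurableSet_Icc).2 (Filter.Eventually.of_forall hB)

lemma sub_intervalIntegrable {l : ℝ} (hl : 0 ≤ l) {𝕜 : Type*} [NormedRing 𝕜] {f : ℝ → 𝕜}
    (hf : IntegrableOn f (Icc 0 l) volume) {x : ℝ} (hx : x ∈ Icc 0 l) :
    IntervalIntegrable f volume 0 x := by
  apply (hf.mono_set ?_).intervalIntegrable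
  rw [uIcc_of_le hx.1]
  exact Icc_subset_Icc le_rfl hx.2

-- generalized integral identity for the derivative
lemma ode_deriv_integral' {l : ℝ} {V : ℝ → ℝ}
    (hVint : IntegrableOn (fun t => ((V t : ℝ) : ℂ)) (Icc 0 l) volume) {z : ℂ}
    {g r : ℝ → ℂ}
    (hg : ∀ x : ℝ, DifferentiableAt ℝ g x ∧ DifferentiableAt ℝ (deriv g) x)
    (hr : Continuous r)
    (hode : ∀ x ∈ Icc 0 l, deriv (deriv g) x = ((V x : ℂ) - z) * g x + r x)
    {x : ℝ} (hx : x ∈ Icc 0 l) :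
    deriv g x = deriv g 0 + ∫ t in (0:ℝ)..x, (((V t : ℂ) - z) * g t + r t) := by
  have hgc : Continuous g := Differentiable.continuous (fun t => (hg t).1)
  have hVz : IntegrableOn (fun t => ((V t : ℂ) - z)) (Icc 0 l) volume := by
    apply hVint.sub
    exact integrableOn_const (by simp [Real.volume_Icc])
  have hint : IntegrableOn (fun t => ((V t : ℂ) - z) * g t + r t) (Icc 0 l) volume := by
    have h1 : IntegrableOn (fun t => g t * ((V t : ℂ) - z)) (Icc 0 l) volume :=
      int_cont_mul hVz hgc
    have h2 : IntegrableOn (fun t => ((V t : ℂ) - z) * g t) (Icc 0 l) volume := by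
      simpa [mul_comm] using h1
    exact h2.add (hr.integrableOn_Icc)
  have h2 : IntervalIntegrable (fun t => deriv (deriv g) t) volume 0 x := by
    rw [intervalIntegrable_iff_integrableOn_Ioc_of_le hx.1]
    apply (hint.mono_set (Ioc_subset_Icc_self.trans (Icc_subset_Icc le_rfl hx.2))).congr_fun
      ?_ measurableSet_Ioc
    intro t ht
    exact (hode t ⟨le_of_lt ht.1, ht.2.trans hx.2⟩).symm
  have h1 := intervalIntegral.integral_eq_sub_of_hasDerivAt
    (f := deriv g) (f' := fun t => deriv (deriv g) t) (a := 0) (b := x)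
    (fun t _ => (hg t).2.hasDerivAt) h2
  rw [intervalIntegral.integral_congr
    (g := fun t => ((V t : ℂ) - z) * g t + r t) ?_] at h1
  · rw [h1]; ring
  · intro t ht
    rw [uIcc_of_le hx.1] at ht
    exact hode t ⟨ht.1, ht.2.trans hx.2⟩

lemma ftc_simple {g : ℝ → ℂ} (hg : ∀ x : ℝ, DifferentiableAt ℝ g x ∧
    DifferentiableAt ℝ (deriv g) x) (x : ℝ) :
    g x = g 0 + ∫ t in (0:ℝ)..x, deriv g t := by
  have hc : Continuous (deriv g) :=
    Differentiable.continuous (fun t => (hg t).2)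
  have := intervalIntegral.integral_eq_sub_of_hasDerivAt
    (f := g) (f' := deriv g) (a := 0) (b := x)
    (fun t _ => (hg t).1.hasDerivAt) (hc.intervalIntegrable 0 x)
  rw [this]; ring

lemma ode_apriori_bound {l : ℝ} (hl : 0 ≤ l) {w : ℝ → ℝ} {C : ℝ}
    (hC : ∀ (ε : ℝ) (u : ℝ → ℝ), 0 ≤ ε → Continuous u → (∀ t, 0 ≤ u t) →
      (∀ x ∈ Icc 0 l, u x ≤ ε + ∫ t in (0:ℝ)..x, w t * u t) → ∀ x ∈ Icc 0 l, u x ≤ C * ε)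
    (hw_int : IntegrableOn w (Icc 0 l) volume)
    {V : ℝ → ℝ} (hVint : IntegrableOn (fun t => ((V t : ℝ) : ℂ)) (Icc 0 l) volume)
    {z : ℂ} (hwz : ∀ t, 1 + ‖(V t : ℂ) - z‖ ≤ w t)
    {d r : ℝ → ℂ} (hd : ∀ x : ℝ, DifferentiableAt ℝ d x ∧ DifferentiableAt ℝ (deriv d) x)
    (hr : Continuous r)
    (hode : ∀ x ∈ Icc 0 l, deriv (deriv d) x = ((V x : ℂ) - z) * d x + r x)
    (h0 : d 0 = 0) (h0' : deriv d 0 = 0)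
    {ε : ℝ} (hε : 0 ≤ ε) (hrε : ∀ x ∈ Icc 0 l, (∫ t in (0:ℝ)..x, ‖r t‖) ≤ ε) :
    ∀ x ∈ Icc 0 l, ‖d x‖ + ‖deriv d x‖ ≤ C * ε := by
  have hdc : Continuous d := Differentiable.continuous (fun t => (hd t).1)
  have hd'c : Continuous (deriv d) := Differentiable.continuous (fun t => (hd t).2)
  have hVz : IntegrableOn (fun t => ((V t : ℂ) - z)) (Icc 0 l) volume := by
    apply hVint.sub
    exact integrableOn_const (by simp [Real.volume_Icc])
  set u : ℝ → ℝ := fun t => ‖d t‖ + ‖deriv d t‖ with hu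
  have huc : Continuous u := hdc.norm.add hd'c.norm
  have hunn : ∀ t, 0 ≤ u t := fun t => by positivity
  -- integrable integrands
  have hVzd : IntegrableOn (fun t => ((V t : ℂ) - z) * d t + r t) (Icc 0 l) volume := by
    have h1 : IntegrableOn (fun t => d t * ((V t : ℂ) - z)) (Icc 0 l) volume :=
      int_cont_mul hVz hdc
    have h2 : IntegrableOn (fun t => ((V t : ℂ) - z) * d t) (Icc 0 l) volume := by
      simpa [mul_comm] using h1
    exact h2.add hr.integrableOn_Icc
  have hwu : IntegrableOn (fun t => w t * u t) (Icc 0 l) volume := by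
    simpa [mul_comm] using int_cont_mul hw_int huc
  have hineq : ∀ x ∈ Icc 0 l, u x ≤ ε + ∫ t in (0:ℝ)..x, w t * u t := by
    intro x hx
    have e1 : ‖d x‖ ≤ ∫ t in (0:ℝ)..x, ‖deriv d t‖ := by
      have h := ftc_simple hd x
      rw [h0, zero_add] at h
      rw [h]
      exact intervalIntegral.norm_integral_le_integral_norm hx.1
    have e2 : ‖deriv d x‖ ≤ ∫ t in (0:ℝ)..x, ‖((V t : ℂ) - z) * d t + r t‖ := by
      have h := ode_deriv_integral' hVint hd hr hode hx
      rw [h0', zero_add] at h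
      rw [h]
      exact intervalIntegral.norm_integral_le_integral_norm hx.1
    have i1 : IntervalIntegrable (fun t => ‖deriv d t‖) volume 0 x :=
      hd'c.norm.intervalIntegrable 0 x
    have i2 : IntervalIntegrable (fun t => ‖((V t : ℂ) - z) * d t + r t‖) volume 0 x :=
      sub_intervalIntegrable hl hVzd.norm hx
    have i3 : IntervalIntegrable (fun t => w t * u t) volume 0 x :=
      sub_intervalIntegrable hl hwu hx
    have i4 : IntervalIntegrable (fun t => ‖r t‖) volume 0 x :=
      hr.norm.intervalIntegrable 0 x
    have e3 : (∫ t in (0:ℝ)..x, ‖deriv d t‖) + ∫ t in (0:ℝ)..x, ‖((V t : ℂ) - z) * d t + r t‖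
        = ∫ t in (0:ℝ)..x, (‖deriv d t‖ + ‖((V t : ℂ) - z) * d t + r t‖) :=
      (intervalIntegral.integral_add i1 i2).symm
    have e4 : (∫ t in (0:ℝ)..x, (‖deriv d t‖ + ‖((V t : ℂ) - z) * d t + r t‖))
        ≤ ∫ t in (0:ℝ)..x, (w t * u t + ‖r t‖) := by
      apply intervalIntegral.integral_mono_on hx.1 (i1.add i2) (i3.add i4)
      intro t _
      have hn1 : ‖((V t : ℂ) - z) * d t + r t‖ ≤ ‖(V t : ℂ) - z‖ * ‖d t‖ + ‖r t‖ := by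
        calc ‖((V t : ℂ) - z) * d t + r t‖ ≤ ‖((V t : ℂ) - z) * d t‖ + ‖r t‖ :=
              norm_add_le _ _
          _ = ‖(V t : ℂ) - z‖ * ‖d t‖ + ‖r t‖ := by rw [norm_mul]
      have hw1 := hwz t
      have h1 : (0:ℝ) ≤ ‖(V t : ℂ) - z‖ := norm_nonneg _
      have h2 : (0:ℝ) ≤ ‖d t‖ := norm_nonneg _
      have h3 : (0:ℝ) ≤ ‖deriv d t‖ := norm_nonneg _
      have key : ‖deriv d t‖ + (‖(V t : ℂ) - z‖ * ‖d t‖) ≤ w t * u t := by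
        have : (1 + ‖(V t : ℂ) - z‖) * (‖d t‖ + ‖deriv d t‖) ≤ w t * u t := by
          apply mul_le_mul_of_nonneg_right hw1 (by positivity)
        nlinarith
      linarith
    have e5 : (∫ t in (0:ℝ)..x, (w t * u t + ‖r t‖))
        = (∫ t in (0:ℝ)..x, w t * u t) + ∫ t in (0:ℝ)..x, ‖r t‖ :=
      intervalIntegral.integral_add i3 i4
    have := hrε x hx
    calc u x = ‖d x‖ + ‖deriv d x‖ := rfl
      _ ≤ (∫ t in (0:ℝ)..x, ‖deriv d t‖) + ∫ t in (0:ℝ)..x, ‖((V t:ℂ) - z) * d t + r t‖ :=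
          add_le_add e1 e2
      _ = ∫ t in (0:ℝ)..x, (‖deriv d t‖ + ‖((V t:ℂ) - z) * d t + r t‖) := e3
      _ ≤ ∫ t in (0:ℝ)..x, (w t * u t + ‖r t‖) := e4
      _ = (∫ t in (0:ℝ)..x, w t * u t) + ∫ t in (0:ℝ)..x, ‖r t‖ := e5
      _ ≤ ε + ∫ t in (0:ℝ)..x, w t * u t := by linarith
  exact hC ε u hε huc hunn hineq
lemma wronskian_identity {l : ℝ} (hl : 0 ≤ l) {V : ℝ → ℝ} {z₁ z₂ : ℂ} {a b : ℝ → ℂ}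
    (ha : ∀ x : ℝ, DifferentiableAt ℝ a x ∧ DifferentiableAt ℝ (deriv a) x)
    (hb : ∀ x : ℝ, DifferentiableAt ℝ b x ∧ DifferentiableAt ℝ (deriv b) x)
    (hodea : ∀ x ∈ Icc 0 l, deriv (deriv a) x = ((V x : ℂ) - z₁) * a x)
    (hodeb : ∀ x ∈ Icc 0 l, deriv (deriv b) x = ((V x : ℂ) - z₂) * b x) :
    a l * deriv b l - deriv a l * b l - (a 0 * deriv b 0 - deriv a 0 * b 0)
      = (z₁ - z₂) * ∫ t in (0:ℝ)..l, a t * b t := by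
  have hac : Continuous a := Differentiable.continuous (fun t => (ha t).1)
  have hbc : Continuous b := Differentiable.continuous (fun t => (hb t).1)
  set W : ℝ → ℂ := fun t => a t * deriv b t - deriv a t * b t with hWdef
  set W' : ℝ → ℂ := fun t => a t * deriv (deriv b) t - deriv (deriv a) t * b t with hW'def
  have hW : ∀ t : ℝ, HasDerivAt W (W' t) t := by
    intro t
    have h1 := (ha t).1.hasDerivAt.mul (hb t).2.hasDerivAt
    have h2 := (ha t).2.hasDerivAt.mul (hb t).1.hasDerivAt
    have h3 := h1.sub h2
    exact h3.congr_deriv (by show _ = a t * deriv (deriv b) t - deriv (deriv a) t * b t; ring)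
  have heq : ∀ t ∈ Icc 0 l, W' t = (z₁ - z₂) * (a t * b t) := by
    intro t ht
    simp only [hW'def, hodea t ht, hodeb t ht]; ring
  have hcont : Continuous (fun t => (z₁ - z₂) * (a t * b t)) :=
    continuous_const.mul (hac.mul hbc)
  have hWi : IntervalIntegrable W' volume 0 l := by
    rw [intervalIntegrable_iff_integrableOn_Ioc_of_le hl]
    apply (hcont.integrableOn_Ioc).congr_fun ?_ measurableSet_Ioc
    intro t ht
    exact (heq t ⟨le_of_lt ht.1, ht.2⟩).symm
  have h1 := intervalIntegral.integral_eq_sub_of_hasDerivAt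
    (f := W) (f' := W') (a := 0) (b := l) (fun t _ => hW t) hWi
  rw [intervalIntegral.integral_congr (g := fun t => (z₁ - z₂) * (a t * b t))
    (by intro t ht; rw [uIcc_of_le hl] at ht; exact heq t ht)] at h1
  rw [intervalIntegral.integral_const_mul] at h1
  simp only [hWdef] at h1
  rw [← h1]
lemma ode_unique_zero {l : ℝ} (hl : 0 ≤ l) {V : ℝ → ℝ}
    (hVint : IntegrableOn (fun t => ((V t : ℝ) : ℂ)) (Icc 0 l) volume) {z : ℂ} {g : ℝ → ℂ}
    (hg : ∀ x : ℝ, DifferentiableAt ℝ g x ∧ DifferentiableAt ℝ (deriv g) x)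
    (hode : ∀ x ∈ Icc 0 l, deriv (deriv g) x = ((V x : ℂ) - z) * g x)
    (h0 : g 0 = 0) (h0' : deriv g 0 = 0) : ∀ x ∈ Icc 0 l, g x = 0 := by
  have hVz : IntegrableOn (fun t => ((V t : ℂ) - z)) (Icc 0 l) volume := by
    apply hVint.sub
    exact integrableOn_const (by simp [Real.volume_Icc])
  set w : ℝ → ℝ := fun t => 1 + ‖(V t : ℂ) - z‖ with hw
  have hw_int : IntegrableOn w (Icc 0 l) volume := by
    apply Integrable.add
    · exact integrableOn_const (by simp [Real.volume_Icc])
    · exact hVz.norm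
  have hw_nn : ∀ t, 0 ≤ w t := fun t => by positivity
  obtain ⟨C, hC0, hC⟩ := gronwall_L1 hl hw_int hw_nn
  have := ode_apriori_bound hl hC hw_int hVint (z := z)
    (fun t => le_refl (w t)) hg continuous_const
    (r := fun _ => (0:ℂ)) (by intro x hx; rw [hode x hx]; ring) h0 h0'
    (ε := 0) le_rfl (by intro x hx; simp)
  intro x hx
  have h2 := this x hx
  have h3 : ‖g x‖ ≤ 0 := by
    have := norm_nonneg (deriv g x)
    simp only [mul_zero] at h2
    linarith
  simpa using le_antisymm h3 (norm_nonneg _)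

lemma reg_sub_smul {f g : ℝ → ℂ} (c : ℂ)
    (hf : ∀ x : ℝ, DifferentiableAt ℝ f x ∧ DifferentiableAt ℝ (deriv f) x)
    (hg : ∀ x : ℝ, DifferentiableAt ℝ g x ∧ DifferentiableAt ℝ (deriv g) x) :
    (∀ x : ℝ, DifferentiableAt ℝ (fun t => f t - c * g t) x ∧
      DifferentiableAt ℝ (deriv (fun t => f t - c * g t)) x) ∧
    (∀ x : ℝ, deriv (fun t => f t - c * g t) x = deriv f x - c * deriv g x) ∧
    (∀ x : ℝ, deriv (deriv (fun t => f t - c * g t)) x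
      = deriv (deriv f) x - c * deriv (deriv g) x) := by
  have h1 : ∀ x : ℝ, HasDerivAt (fun t => f t - c * g t)
      (deriv f x - c * deriv g x) x := fun x =>
    (hf x).1.hasDerivAt.sub (((hg x).1.hasDerivAt).const_mul c)
  have hd : deriv (fun t => f t - c * g t) = fun x => deriv f x - c * deriv g x :=
    funext fun x => (h1 x).deriv
  have h2 : ∀ x : ℝ, HasDerivAt (deriv (fun t => f t - c * g t))
      (deriv (deriv f) x - c * deriv (deriv g) x) x := by
    rw [hd]
    exact fun x => (hf x).2.hasDerivAt.sub (((hg x).2.hasDerivAt).const_mul c)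
  exact ⟨fun x => ⟨(h1 x).differentiableAt, (h2 x).differentiableAt⟩,
    fun x => (h1 x).deriv, fun x => (h2 x).deriv⟩

lemma hasDerivAt_conj {f : ℝ → ℂ} {f' : ℂ} {x : ℝ} (hf : HasDerivAt f f' x) :
    HasDerivAt (fun t => (starRingEnd ℂ) (f t)) ((starRingEnd ℂ) f') x := by
  have := Complex.conjCLE.toContinuousLinearMap.hasFDerivAt.comp_hasDerivAt x hf
  exact this

/-- If `μ` is an eigenvalue of the Dirichlet operator
`D f = -f'' + V f`, `f(0)=f(l)=0`, on `[0,l]`, then `u₁(l;μ) = 0`, and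
`∂_z u₁(l;z)|_{z=μ} = u₂(l;μ) ∫₀ˡ u₁(s;μ)² ds ≠ 0`; in particular `μ` is a
simple zero of the entire function `z ↦ u₁(l;z)`. -/
theorem dirichlet_eigenvalue_simple_zero
    (l : ℝ) (hl : 0 < l) (V : ℝ → ℝ)
    (hV : MemLp V 2 (volume.restrict (Icc 0 l)))
    (u₁ u₂ : ℂ → ℝ → ℂ)
    (hreg₁ : ∀ z : ℂ, ∀ x : ℝ, DifferentiableAt ℝ (u₁ z) x ∧
      DifferentiableAt ℝ (deriv (u₁ z)) x)
    (hreg₂ : ∀ z : ℂ, ∀ x : ℝ, DifferentiableAt ℝ (u₂ z) x ∧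
      DifferentiableAt ℝ (deriv (u₂ z)) x)
    (hode₁ : ∀ z : ℂ, ∀ x ∈ Icc 0 l,
      -(deriv (deriv (u₁ z)) x) + (V x : ℂ) * u₁ z x = z * u₁ z x)
    (hode₂ : ∀ z : ℂ, ∀ x ∈ Icc 0 l,
      -(deriv (deriv (u₂ z)) x) + (V x : ℂ) * u₂ z x = z * u₂ z x)
    (hic₁ : ∀ z : ℂ, u₁ z 0 = 0 ∧ deriv (u₁ z) 0 = 1)
    (hic₂ : ∀ z : ℂ, u₂ z 0 = 1 ∧ deriv (u₂ z) 0 = 0)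
    -- `u₁(l;·)` is entire in `z`
    (hent : Differentiable ℂ (fun z : ℂ => u₁ z l))
    -- `μ` is a Dirichlet eigenvalue: there is a nonzero eigenfunction
    (μ : ℝ)
    (hμ : ∃ f : ℝ → ℂ,
      (∀ x : ℝ, DifferentiableAt ℝ f x ∧ DifferentiableAt ℝ (deriv f) x) ∧
      (∀ x ∈ Icc 0 l, -(deriv (deriv f) x) + (V x : ℂ) * f x = (μ : ℂ) * f x) ∧
      f 0 = 0 ∧ f l = 0 ∧ (∃ x ∈ Icc 0 l, f x ≠ 0)) :
    u₁ (μ : ℂ) l = 0 ∧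
    deriv (fun z : ℂ => u₁ z l) (μ : ℂ)
      = u₂ (μ : ℂ) l * ∫ s in (0:ℝ)..l, (u₁ (μ : ℂ) s) ^ 2 ∧
    deriv (fun z : ℂ => u₁ z l) (μ : ℂ) ≠ 0 := by
  obtain ⟨f, hfreg, hfode, hf0, hfl, x₀, hx₀mem, hfx₀⟩ := hμ
  haveI : IsFiniteMeasure (volume.restrict (Icc (0:ℝ) l)) := by
    constructor
    rw [Measure.restrict_apply_univ]
    simp [Real.volume_Icc]
  have hVR : IntegrableOn V (Icc 0 l) volume := hV.integrable (by norm_num)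
  have hVC : IntegrableOn (fun t => ((V t : ℝ) : ℂ)) (Icc 0 l) volume := hVR.ofReal
  have hode1' : ∀ z : ℂ, ∀ x ∈ Icc 0 l,
      deriv (deriv (u₁ z)) x = ((V x : ℂ) - z) * u₁ z x := by
    intro z x hx
    have h := hode₁ z x hx
    linear_combination -h
  have hode2' : ∀ z : ℂ, ∀ x ∈ Icc 0 l,
      deriv (deriv (u₂ z)) x = ((V x : ℂ) - z) * u₂ z x := by
    intro z x hx
    have h := hode₂ z x hx
    linear_combination -h
  have hodef' : ∀ x ∈ Icc 0 l,
      deriv (deriv f) x = ((V x : ℂ) - (μ:ℂ)) * f x := by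
    intro x hx
    have h := hfode x hx
    linear_combination -h
  have hpc : Continuous (u₁ (μ:ℂ)) := Differentiable.continuous (fun x => (hreg₁ μ x).1)
  -- Part 1 : u₁ μ l = 0
  obtain ⟨hgreg, hgd1, hgd2⟩ := reg_sub_smul (deriv f 0) hfreg (hreg₁ (μ:ℂ))
  have hgode : ∀ x ∈ Icc 0 l,
      deriv (deriv (fun t => f t - deriv f 0 * u₁ (μ:ℂ) t)) x
        = ((V x : ℂ) - (μ:ℂ)) * (f x - deriv f 0 * u₁ (μ:ℂ) x) := by
    intro x hx
    rw [hgd2 x, hodef' x hx, hode1' (μ:ℂ) x hx]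
    ring
  have hg0 : (fun t => f t - deriv f 0 * u₁ (μ:ℂ) t) 0 = 0 := by
    simp [hf0, (hic₁ (μ:ℂ)).1]
  have hg0' : deriv (fun t => f t - deriv f 0 * u₁ (μ:ℂ) t) 0 = 0 := by
    rw [hgd1 0, (hic₁ (μ:ℂ)).2]
    ring
  have huni := ode_unique_zero hl.le hVC hgreg hgode hg0 hg0'
  have hfp : ∀ x ∈ Icc 0 l, f x = deriv f 0 * u₁ (μ:ℂ) x := by
    intro x hx
    have := huni x hx
    simp only [sub_eq_zero] at this
    exact this
  have ha0 : deriv f 0 ≠ 0 := by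
    intro h
    apply hfx₀
    rw [hfp x₀ hx₀mem, h, zero_mul]
  have hpl : u₁ (μ:ℂ) l = 0 := by
    have h := hfp l ⟨hl.le, le_rfl⟩
    rw [hfl] at h
    rcases mul_eq_zero.1 h.symm with h' | h'
    · exact absurd h' ha0
    · exact h'
  -- Wronskian of u₁ μ and u₂ μ : deriv (u₁ μ) l * u₂ μ l = 1
  have hw1 := wronskian_identity hl.le (hreg₁ (μ:ℂ)) (hreg₂ (μ:ℂ))
    (hode1' (μ:ℂ)) (hode2' (μ:ℂ))
  rw [hpl, (hic₁ (μ:ℂ)).1, (hic₂ (μ:ℂ)).1, (hic₁ (μ:ℂ)).2, (hic₂ (μ:ℂ)).2,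
    sub_self, zero_mul] at hw1
  have hcq : deriv (u₁ (μ:ℂ)) l * u₂ (μ:ℂ) l = 1 := by linear_combination -hw1
  have hcne : deriv (u₁ (μ:ℂ)) l ≠ 0 := left_ne_zero_of_mul_eq_one hcq
  have hql : u₂ (μ:ℂ) l = (deriv (u₁ (μ:ℂ)) l)⁻¹ := eq_inv_of_mul_eq_one_left
    (by rw [mul_comm]; exact hcq)
  -- Wronskian of u₁ z and u₁ μ
  have hD : ∀ z : ℂ, deriv (u₁ (μ:ℂ)) l * u₁ z l
      = (z - (μ:ℂ)) * ∫ t in (0:ℝ)..l, u₁ z t * u₁ (μ:ℂ) t := by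
    intro z
    have hw2 := wronskian_identity hl.le (hreg₁ z) (hreg₁ (μ:ℂ))
      (hode1' z) (hode1' (μ:ℂ))
    rw [hpl, (hic₁ z).1, (hic₁ (μ:ℂ)).1] at hw2
    linear_combination hw2
  -- quantitative continuity of z ↦ u₁ z on [0,l] near μ
  have hVzμ : IntegrableOn (fun t => ((V t : ℂ) - (μ:ℂ))) (Icc 0 l) volume := by
    apply hVC.sub
    exact integrableOn_const (by simp [Real.volume_Icc])
  set w2 : ℝ → ℝ := fun t => 2 + ‖(V t : ℂ) - (μ:ℂ)‖ with hw2def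
  have hw2int : IntegrableOn w2 (Icc 0 l) volume := by
    apply Integrable.add
    · exact integrableOn_const (by simp [Real.volume_Icc])
    · exact hVzμ.norm
  have hw2nn : ∀ t, 0 ≤ w2 t := fun t => by positivity
  obtain ⟨C, hC0, hC⟩ := gronwall_L1 hl.le hw2int hw2nn
  set Cp : ℝ := ∫ t in (0:ℝ)..l, ‖u₁ (μ:ℂ) t‖ with hCpdef
  have hCp0 : 0 ≤ Cp :=
    intervalIntegral.integral_nonneg hl.le (fun t _ => norm_nonneg _)
  have hclose : ∀ z : ℂ, ‖z - (μ:ℂ)‖ ≤ 1 → ∀ x ∈ Icc 0 l,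
      ‖u₁ z x - u₁ (μ:ℂ) x‖ ≤ C * (‖z - (μ:ℂ)‖ * Cp) := by
    intro z hz1
    obtain ⟨hdreg, hdd1, hdd2⟩ := reg_sub_smul 1 (hreg₁ z) (hreg₁ (μ:ℂ))
    have hode_d : ∀ x ∈ Icc 0 l,
        deriv (deriv (fun t => u₁ z t - 1 * u₁ (μ:ℂ) t)) x
          = ((V x : ℂ) - z) * (fun t => u₁ z t - 1 * u₁ (μ:ℂ) t) x
            + ((μ:ℂ) - z) * u₁ (μ:ℂ) x := by
      intro x hx
      rw [hdd2 x, hode1' z x hx, hode1' (μ:ℂ) x hx]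
      simp only
      ring
    have hd0 : (fun t => u₁ z t - 1 * u₁ (μ:ℂ) t) 0 = 0 := by
      simp [(hic₁ z).1, (hic₁ (μ:ℂ)).1]
    have hd0' : deriv (fun t => u₁ z t - 1 * u₁ (μ:ℂ) t) 0 = 0 := by
      rw [hdd1 0, (hic₁ z).2, (hic₁ (μ:ℂ)).2]
      ring
    have hwz : ∀ t, 1 + ‖(V t : ℂ) - z‖ ≤ w2 t := by
      intro t
      have h1 : ‖(V t : ℂ) - z‖ ≤ ‖(V t : ℂ) - (μ:ℂ)‖ + ‖z - (μ:ℂ)‖ := by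
        have := norm_sub_le ((V t : ℂ) - (μ:ℂ)) (z - (μ:ℂ))
        simpa using this
      simp only [hw2def]
      linarith
    have hrc : Continuous (fun t => ((μ:ℂ) - z) * u₁ (μ:ℂ) t) :=
      continuous_const.mul hpc
    have hrε : ∀ x ∈ Icc 0 l,
        (∫ t in (0:ℝ)..x, ‖((μ:ℂ) - z) * u₁ (μ:ℂ) t‖) ≤ ‖z - (μ:ℂ)‖ * Cp := by
      intro x hx
      have e1 : (∫ t in (0:ℝ)..x, ‖((μ:ℂ) - z) * u₁ (μ:ℂ) t‖)
          = ‖(μ:ℂ) - z‖ * ∫ t in (0:ℝ)..x, ‖u₁ (μ:ℂ) t‖ := by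
        rw [← intervalIntegral.integral_const_mul]
        apply intervalIntegral.integral_congr
        intro t _
        simp [norm_mul]
      have e2 : (∫ t in (0:ℝ)..x, ‖u₁ (μ:ℂ) t‖) ≤ Cp := by
        have hadd : (∫ t in (0:ℝ)..x, ‖u₁ (μ:ℂ) t‖) + ∫ t in x..l, ‖u₁ (μ:ℂ) t‖ = Cp :=
          integral_add_adjacent_intervals (hpc.norm.intervalIntegrable 0 x)
            (hpc.norm.intervalIntegrable x l)
        have hnn : 0 ≤ ∫ t in x..l, ‖u₁ (μ:ℂ) t‖ :=
          intervalIntegral.integral_nonneg hx.2 (fun t _ => norm_nonneg _)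
        linarith
      rw [e1, norm_sub_rev]
      exact mul_le_mul_of_nonneg_left e2 (norm_nonneg _)
    have := ode_apriori_bound hl.le hC hw2int hVC hwz hdreg hrc hode_d hd0 hd0'
      (ε := ‖z - (μ:ℂ)‖ * Cp) (by positivity) hrε
    intro x hx
    have h2 := this x hx
    have h3 := norm_nonneg (deriv (fun t => u₁ z t - 1 * u₁ (μ:ℂ) t) x)
    have h4 : ‖u₁ z x - u₁ (μ:ℂ) x‖
        = ‖(fun t => u₁ z t - 1 * u₁ (μ:ℂ) t) x‖ := by simp
    rw [h4]
    linarith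
  -- continuity of I at μ
  set I : ℂ → ℂ := fun z => ∫ t in (0:ℝ)..l, u₁ z t * u₁ (μ:ℂ) t with hIdef
  have hu₁cont : ∀ z : ℂ, Continuous (u₁ z) :=
    fun z => Differentiable.continuous (fun x => (hreg₁ z x).1)
  have hIbound : ∀ z : ℂ, ‖z - (μ:ℂ)‖ ≤ 1 →
      ‖I z - I (μ:ℂ)‖ ≤ (C * Cp * Cp) * ‖z - (μ:ℂ)‖ := by
    intro z hz
    have hint1 : IntervalIntegrable (fun t => u₁ z t * u₁ (μ:ℂ) t) volume 0 l :=
      ((hu₁cont z).mul hpc).intervalIntegrable 0 l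
    have hint2 : IntervalIntegrable (fun t => u₁ (μ:ℂ) t * u₁ (μ:ℂ) t) volume 0 l :=
      (hpc.mul hpc).intervalIntegrable 0 l
    have hsub : I z - I (μ:ℂ) = ∫ t in (0:ℝ)..l, (u₁ z t - u₁ (μ:ℂ) t) * u₁ (μ:ℂ) t := by
      simp only [hIdef]
      rw [← intervalIntegral.integral_sub hint1 hint2]
      apply intervalIntegral.integral_congr
      intro t _
      ring
    rw [hsub]
    have hb1 : ‖∫ t in (0:ℝ)..l, (u₁ z t - u₁ (μ:ℂ) t) * u₁ (μ:ℂ) t‖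
        ≤ ∫ t in (0:ℝ)..l, ‖(u₁ z t - u₁ (μ:ℂ) t) * u₁ (μ:ℂ) t‖ :=
      intervalIntegral.norm_integral_le_integral_norm hl.le
    have hb2 : (∫ t in (0:ℝ)..l, ‖(u₁ z t - u₁ (μ:ℂ) t) * u₁ (μ:ℂ) t‖)
        ≤ ∫ t in (0:ℝ)..l, (C * (‖z - (μ:ℂ)‖ * Cp)) * ‖u₁ (μ:ℂ) t‖ := by
      apply intervalIntegral.integral_mono_on hl.le
      · exact (((hu₁cont z).sub hpc).mul hpc).norm.intervalIntegrable 0 l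
      · exact (hpc.norm.intervalIntegrable 0 l).const_mul _
      · intro t ht
        rw [norm_mul]
        exact mul_le_mul_of_nonneg_right (hclose z hz t ht) (norm_nonneg _)
    have hb3 : (∫ t in (0:ℝ)..l, (C * (‖z - (μ:ℂ)‖ * Cp)) * ‖u₁ (μ:ℂ) t‖)
        = (C * (‖z - (μ:ℂ)‖ * Cp)) * Cp := by
      rw [intervalIntegral.integral_const_mul]
    calc ‖∫ t in (0:ℝ)..l, (u₁ z t - u₁ (μ:ℂ) t) * u₁ (μ:ℂ) t‖
        ≤ ∫ t in (0:ℝ)..l, ‖(u₁ z t - u₁ (μ:ℂ) t) * u₁ (μ:ℂ) t‖ := hb1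
      _ ≤ ∫ t in (0:ℝ)..l, (C * (‖z - (μ:ℂ)‖ * Cp)) * ‖u₁ (μ:ℂ) t‖ := hb2
      _ = (C * (‖z - (μ:ℂ)‖ * Cp)) * Cp := hb3
      _ = (C * Cp * Cp) * ‖z - (μ:ℂ)‖ := by ring
  have htendI : Filter.Tendsto I (nhds (μ:ℂ)) (nhds (I (μ:ℂ))) := by
    have h0 : Filter.Tendsto (fun z : ℂ => I z - I (μ:ℂ)) (nhds (μ:ℂ)) (nhds 0) := by
      refine squeeze_zero_norm' (a := fun z : ℂ => (C * Cp * Cp) * ‖z - (μ:ℂ)‖) ?_ ?_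
      · filter_upwards [Metric.closedBall_mem_nhds (μ:ℂ) one_pos] with z hz
        exact hIbound z (by rwa [← dist_eq_norm, ← Metric.mem_closedBall])
      · have hcont : Continuous fun z : ℂ => (C * Cp * Cp) * ‖z - (μ:ℂ)‖ :=
          continuous_const.mul ((continuous_id.sub continuous_const).norm)
        have := hcont.tendsto (μ:ℂ)
        simpa using this
    have := h0.add (tendsto_const_nhds (x := I (μ:ℂ)))
    simpa using this
  -- compute the derivative via the slope
  have hGd : HasDerivAt (fun z : ℂ => u₁ z l)
      (deriv (fun z : ℂ => u₁ z l) (μ:ℂ)) (μ:ℂ) := (hent (μ:ℂ)).hasDerivAt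
  have hslope := hasDerivAt_iff_tendsto_slope.1 hGd
  have heq : ∀ᶠ z in nhdsWithin (μ:ℂ) {(μ:ℂ)}ᶜ,
      slope (fun z : ℂ => u₁ z l) (μ:ℂ) z = (deriv (u₁ (μ:ℂ)) l)⁻¹ * I z := by
    filter_upwards [self_mem_nhdsWithin] with z hz
    have hzne : z - (μ:ℂ) ≠ 0 := sub_ne_zero.2 hz
    rw [slope_def_field]
    simp only [hpl, sub_zero]
    have hDz := hD z
    field_simp [hcne]
    linear_combination hDz
  have htendI' : Filter.Tendsto (fun z : ℂ => (deriv (u₁ (μ:ℂ)) l)⁻¹ * I z)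
      (nhdsWithin (μ:ℂ) {(μ:ℂ)}ᶜ) (nhds ((deriv (u₁ (μ:ℂ)) l)⁻¹ * I (μ:ℂ))) :=
    (htendI.const_mul _).mono_left nhdsWithin_le_nhds
  have hderiv_eq : deriv (fun z : ℂ => u₁ z l) (μ:ℂ)
      = (deriv (u₁ (μ:ℂ)) l)⁻¹ * I (μ:ℂ) :=
    tendsto_nhds_unique (hslope.congr' heq) htendI'
  -- realness of u₁ μ on [0,l]
  have hpb1 : ∀ x : ℝ, HasDerivAt (fun t => (starRingEnd ℂ) (u₁ (μ:ℂ) t))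
      ((starRingEnd ℂ) (deriv (u₁ (μ:ℂ)) x)) x :=
    fun x => hasDerivAt_conj (hreg₁ (μ:ℂ) x).1.hasDerivAt
  have hpbd : deriv (fun t => (starRingEnd ℂ) (u₁ (μ:ℂ) t))
      = fun x => (starRingEnd ℂ) (deriv (u₁ (μ:ℂ)) x) := funext fun x => (hpb1 x).deriv
  have hpb2 : ∀ x : ℝ, HasDerivAt (deriv (fun t => (starRingEnd ℂ) (u₁ (μ:ℂ) t)))
      ((starRingEnd ℂ) (deriv (deriv (u₁ (μ:ℂ))) x)) x := by
    rw [hpbd]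
    exact fun x => hasDerivAt_conj (hreg₁ (μ:ℂ) x).2.hasDerivAt
  have hpbreg : ∀ x : ℝ, DifferentiableAt ℝ (fun t => (starRingEnd ℂ) (u₁ (μ:ℂ) t)) x ∧
      DifferentiableAt ℝ (deriv (fun t => (starRingEnd ℂ) (u₁ (μ:ℂ) t))) x :=
    fun x => ⟨(hpb1 x).differentiableAt, (hpb2 x).differentiableAt⟩
  obtain ⟨hcreg, hcd1, hcd2⟩ := reg_sub_smul 1 (hreg₁ (μ:ℂ)) hpbreg
  have hcode : ∀ x ∈ Icc 0 l,
      deriv (deriv (fun t => u₁ (μ:ℂ) t - 1 * (starRingEnd ℂ) (u₁ (μ:ℂ) t))) x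
        = ((V x : ℂ) - (μ:ℂ)) *
          (fun t => u₁ (μ:ℂ) t - 1 * (starRingEnd ℂ) (u₁ (μ:ℂ) t)) x := by
    intro x hx
    rw [hcd2 x, (hpb2 x).deriv, hode1' (μ:ℂ) x hx]
    rw [map_mul, map_sub, Complex.conj_ofReal, Complex.conj_ofReal]
    simp only
    ring
  have hc0 : (fun t => u₁ (μ:ℂ) t - 1 * (starRingEnd ℂ) (u₁ (μ:ℂ) t)) 0 = 0 := by
    simp [(hic₁ (μ:ℂ)).1]
  have hc0' : deriv (fun t => u₁ (μ:ℂ) t - 1 * (starRingEnd ℂ) (u₁ (μ:ℂ) t)) 0 = 0 := by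
    rw [hcd1 0, hpbd]
    simp [(hic₁ (μ:ℂ)).2]
  have hreal : ∀ x ∈ Icc 0 l, (starRingEnd ℂ) (u₁ (μ:ℂ) x) = u₁ (μ:ℂ) x := by
    intro x hx
    have := ode_unique_zero hl.le hVC hcreg hcode hc0 hc0' x hx
    simp only [one_mul, sub_eq_zero] at this
    exact this.symm
  -- a point where u₁ μ does not vanish
  have hp1 : HasDerivAt (u₁ (μ:ℂ)) 1 0 := by
    have := (hreg₁ (μ:ℂ) 0).1.hasDerivAt
    rwa [(hic₁ (μ:ℂ)).2] at this
  have hs := hasDerivAt_iff_tendsto_slope.1 hp1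
  have hs' : Filter.Tendsto (slope (u₁ (μ:ℂ)) 0) (nhdsWithin 0 (Ioi 0)) (nhds 1) :=
    hs.mono_left (nhdsWithin_mono 0 (fun x (hx : x ∈ Ioi 0) => ne_of_gt hx))
  have hball : ∀ᶠ x in nhdsWithin (0:ℝ) (Ioi 0), slope (u₁ (μ:ℂ)) 0 x ≠ 0 :=
    hs'.eventually_ne (by norm_num)
  have hIoo : Ioo (0:ℝ) l ∈ nhdsWithin (0:ℝ) (Ioi 0) :=
    Ioo_mem_nhdsGT_of_mem ⟨le_rfl, hl⟩
  obtain ⟨x₁, hx₁ne, hx₁mem⟩ :=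
    (hball.and (Filter.eventually_of_mem hIoo (fun x hx => hx))).exists
  have hpx₁ : u₁ (μ:ℂ) x₁ ≠ 0 := by
    intro h
    apply hx₁ne
    simp [slope_def_module, h, (hic₁ (μ:ℂ)).1]
  -- positivity of the integral
  have hφc : Continuous (fun t => (u₁ (μ:ℂ) t).re) := Complex.continuous_re.comp hpc
  have hx₁Icc : x₁ ∈ Icc 0 l := ⟨hx₁mem.1.le, hx₁mem.2.le⟩
  have hφx₁ : (u₁ (μ:ℂ) x₁).re ≠ 0 := by
    intro h
    apply hpx₁
    have h2 := Complex.conj_eq_iff_re.1 (hreal x₁ hx₁Icc)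
    rw [← h2, h, Complex.ofReal_zero]
  have hpos : 0 < ∫ t in (0:ℝ)..l, (u₁ (μ:ℂ) t).re ^ 2 := by
    rw [intervalIntegral.integral_pos_iff_support_of_nonneg_ae
      (Filter.Eventually.of_forall (fun t => sq_nonneg _))
      ((hφc.pow 2).intervalIntegrable 0 l)]
    refine ⟨hl, ?_⟩
    have hUopen : IsOpen ({x : ℝ | (u₁ (μ:ℂ) x).re ≠ 0} ∩ Ioo 0 l) :=
      (isOpen_compl_singleton.preimage hφc).inter isOpen_Ioo
    have hUsub : ({x : ℝ | (u₁ (μ:ℂ) x).re ≠ 0} ∩ Ioo 0 l)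
        ⊆ Function.support (fun t => (u₁ (μ:ℂ) t).re ^ 2) ∩ Ioc 0 l := by
      rintro x ⟨hx1, hx2⟩
      exact ⟨pow_ne_zero 2 hx1, Ioo_subset_Ioc_self hx2⟩
    calc (0:ENNReal) < volume ({x : ℝ | (u₁ (μ:ℂ) x).re ≠ 0} ∩ Ioo 0 l) :=
          hUopen.measure_pos volume ⟨x₁, hφx₁, hx₁mem⟩
      _ ≤ volume (Function.support (fun t => (u₁ (μ:ℂ) t).re ^ 2) ∩ Ioc 0 l) :=
          measure_mono hUsub
  -- I μ as a positive real number
  have hIμreal : I (μ:ℂ) = ((∫ t in (0:ℝ)..l, (u₁ (μ:ℂ) t).re ^ 2 : ℝ) : ℂ) := by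
    have hcongr : ∀ t ∈ uIcc (0:ℝ) l, u₁ (μ:ℂ) t * u₁ (μ:ℂ) t
        = (((u₁ (μ:ℂ) t).re ^ 2 : ℝ) : ℂ) := by
      intro t ht
      rw [uIcc_of_le hl.le] at ht
      have h2 : ((u₁ (μ:ℂ) t).re : ℂ) = u₁ (μ:ℂ) t := Complex.conj_eq_iff_re.1 (hreal t ht)
      calc u₁ (μ:ℂ) t * u₁ (μ:ℂ) t
          = ((u₁ (μ:ℂ) t).re : ℂ) * ((u₁ (μ:ℂ) t).re : ℂ) := by rw [h2]
        _ = (((u₁ (μ:ℂ) t).re ^ 2 : ℝ) : ℂ) := by push_cast; ring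
    simp only [hIdef]
    rw [intervalIntegral.integral_congr hcongr, intervalIntegral.integral_ofReal]
  have hIμne : I (μ:ℂ) ≠ 0 := by
    rw [hIμreal]
    exact Complex.ofReal_ne_zero.2 hpos.ne'
  have hIμsq : I (μ:ℂ) = ∫ s in (0:ℝ)..l, (u₁ (μ:ℂ) s) ^ 2 := by
    simp only [hIdef]
    apply intervalIntegral.integral_congr
    intro t _
    exact (pow_two _).symm
  refine ⟨hpl, ?_, ?_⟩
  · rw [hderiv_eq, hql, ← hIμsq]
  · rw [hderiv_eq]
    exact mul_ne_zero (inv_ne_zero hcne) hIμne
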